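/- arXiv:2210.10760 — 4 statements merged into one kernel-verified Lean document; each statement's English description precedes it below -/
import Mathlib

section
/- Let X and Z be independent real-valued random variables on a probability space, with X Gaussian with mean μ_X and variance σ² > 0 and Z Gaussian with mean μ_Z and variance τ² > 0. Then the conditional expectation of X given the σ-algebra generated by X + Z satisfies, almost surely, E[X | X + Z] = μ_X + (X + Z − μ_X − μ_Z) · σ²/(σ² + τ²). -/
open MeasureTheory ProbabilityTheory
open scoped NNReal

open Real
open scoped ENNReal

section GoodhartHelpers
lemma integral_odd_zero (f : ℝ → ℝ) (hf : ∀ x, f (-x) = - f x) : ∫ x, f x = 0 := by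
  have h := integral_neg_eq_self f (volume : Measure ℝ)
  simp only [hf, integral_neg] at h
  linarith

lemma integrable_mul_gaussianPDFReal (m : ℝ) (v : ℝ≥0) (hv : v ≠ 0) :
    Integrable (fun x => x * gaussianPDFReal m v x) := by
  have hb : (0:ℝ) < (2 * (v:ℝ))⁻¹ := by positivity
  have h1 : Integrable (fun x : ℝ => x * ((√(2 * π * v))⁻¹ * rexp (-(2 * (v:ℝ))⁻¹ * x ^ 2))) := by
    simpa [mul_comm, mul_assoc, mul_left_comm] using
      ((integrable_mul_exp_neg_mul_sq hb).mul_const (√(2 * π * (v:ℝ)))⁻¹)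
  have h2 : Integrable (fun x : ℝ => (√(2 * π * v))⁻¹ * rexp (-(2 * (v:ℝ))⁻¹ * x ^ 2)) :=
    (integrable_exp_neg_mul_sq hb).const_mul _
  have key : Integrable (fun x : ℝ => (x + m) * ((√(2 * π * v))⁻¹ * rexp (-(2 * (v:ℝ))⁻¹ * x ^ 2))) := by
    simpa [add_mul, Pi.add_def] using h1.add (h2.const_mul m)
  have := key.comp_sub_right m
  refine this.congr (ae_of_all _ fun x => ?_)
  simp only [gaussianPDFReal]
  rw [sub_add_cancel]
  congr 1
  · congr 1
    rw [neg_div]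
    congr 1
    field_simp

lemma integral_mul_gaussianPDFReal (m : ℝ) (v : ℝ≥0) (hv : v ≠ 0) :
    ∫ x, x * gaussianPDFReal m v x = m := by
  have hshift : ∫ x, x * gaussianPDFReal m v x
      = ∫ x, (x + m) * gaussianPDFReal m v (x + m) := by
    rw [integral_add_right_eq_self (fun x => x * gaussianPDFReal m v x) m]
  rw [hshift]
  have hpdf : ∀ x : ℝ, gaussianPDFReal m v (x + m) = gaussianPDFReal 0 v x := by
    intro x
    simp [gaussianPDFReal]
  simp_rw [hpdf, add_mul]
  have hInt1 : Integrable (fun x => x * gaussianPDFReal 0 v x) :=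
    integrable_mul_gaussianPDFReal 0 v hv
  have hInt2 : Integrable (fun x => m * gaussianPDFReal 0 v x) :=
    ((integrable_gaussianPDFReal 0 v).const_mul m)
  rw [integral_add hInt1 hInt2, integral_const_mul,
    integral_gaussianPDFReal_eq_one 0 hv]
  have hodd : ∫ x, x * gaussianPDFReal 0 v x = 0 := by
    refine integral_odd_zero _ fun x => ?_
    simp [gaussianPDFReal, neg_mul]
  rw [hodd]
  ring

lemma integrable_dirac_of_measurable {f : ℝ → ℝ} (hf : Measurable f) (a : ℝ) :
    Integrable f (Measure.dirac a) := by
  refine ⟨hf.aestronglyMeasurable, ?_⟩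
  rw [HasFiniteIntegral, lintegral_dirac' a hf.enorm]
  exact enorm_lt_top

lemma integrable_id_gaussianReal (m : ℝ) (v : ℝ≥0) :
    Integrable (fun x => x) (gaussianReal m v) := by
  by_cases hv : v = 0
  · rw [hv, gaussianReal_zero_var]
    exact integrable_dirac_of_measurable measurable_id m
  rw [gaussianReal_of_var_ne_zero m hv, gaussianPDF_def]
  rw [integrable_withDensity_iff (measurable_gaussianPDFReal m v).ennreal_ofReal]
  · refine (integrable_mul_gaussianPDFReal m v hv).congr (ae_of_all _ fun x => ?_)
    simp [ENNReal.toReal_ofReal (gaussianPDFReal_nonneg m v x), mul_comm]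
  · exact ae_of_all _ fun x => ENNReal.ofReal_lt_top

lemma integral_id_gaussianReal (m : ℝ) (v : ℝ≥0) :
    ∫ x, x ∂(gaussianReal m v) = m := by
  by_cases hv : v = 0
  · simp [hv, gaussianReal_zero_var]
  rw [gaussianReal_of_var_ne_zero m hv, gaussianPDF_def]
  simp_rw [ENNReal.ofReal]
  rw [integral_withDensity_eq_integral_smul ((measurable_gaussianPDFReal m v).real_toNNReal)]
  simp_rw [NNReal.smul_def, smul_eq_mul, Real.coe_toNNReal _ (gaussianPDFReal_nonneg m v _),
    mul_comm]
  exact integral_mul_gaussianPDFReal m v hv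

noncomputable def Tlin (c : ℝ) : (ℝ × ℝ) →ₗ[ℝ] (ℝ × ℝ) where
  toFun p := ((1 - c) * p.1 - c * p.2, p.1 + p.2)
  map_add' p q := by ext <;> dsimp <;> ring
  map_smul' r p := by ext <;> dsimp <;> ring

lemma det_Tlin (c : ℝ) : LinearMap.det (Tlin c) = 1 := by
  rw [← LinearMap.det_toMatrix (Module.Basis.finTwoProd ℝ) (Tlin c), Matrix.det_fin_two]
  simp [LinearMap.toMatrix_apply, Tlin, Module.Basis.finTwoProd_zero, Module.Basis.finTwoProd_one]

lemma map_Tlin_volume (c : ℝ) :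
    Measure.map (Tlin c) (volume : Measure (ℝ × ℝ)) = volume := by
  rw [Measure.map_linearMap_addHaar_eq_smul_addHaar _ (by rw [det_Tlin]; norm_num)]
  simp [det_Tlin]

noncomputable def Teq (c : ℝ) : (ℝ × ℝ) ≃ᵐ (ℝ × ℝ) where
  toFun p := ((1 - c) * p.1 - c * p.2, p.1 + p.2)
  invFun q := (q.1 + c * q.2, (1 - c) * q.2 - q.1)
  left_inv p := by ext <;> dsimp <;> ring
  right_inv q := by ext <;> dsimp <;> ring
  measurable_toFun := by
    exact (((measurable_fst.const_mul _).sub (measurable_snd.const_mul _))).prodMk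
      (measurable_fst.add measurable_snd)
  measurable_invFun := by
    exact ((measurable_fst.add (measurable_snd.const_mul _))).prodMk
      ((measurable_snd.const_mul _).sub measurable_fst)

lemma Teq_coe (c : ℝ) : ⇑(Teq c) = ⇑(Tlin c) := rfl

lemma map_withDensity_equiv {α β : Type*} [MeasurableSpace α] [MeasurableSpace β]
    (e : α ≃ᵐ β) (ν : Measure α) {f : α → ℝ≥0∞} (hf : Measurable f) :
    Measure.map e (ν.withDensity f) = (Measure.map e ν).withDensity (f ∘ e.symm) := by
  ext A hA
  rw [MeasurableEquiv.map_apply, withDensity_apply _ (e.measurable hA),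
    withDensity_apply _ hA,
    setLIntegral_map hA (hf.comp e.symm.measurable) e.measurable]
  simp

lemma gaussian_prod_eq_withDensity (a b : ℝ) (u w : ℝ≥0) (hu : u ≠ 0) (hw : w ≠ 0) :
    (gaussianReal a u).prod (gaussianReal b w)
      = (volume : Measure (ℝ × ℝ)).withDensity
          (fun p => gaussianPDF a u p.1 * gaussianPDF b w p.2) := by
  refine Measure.prod_eq fun s t hs ht => ?_
  rw [withDensity_apply _ (hs.prod ht), Measure.volume_eq_prod,
    ← Measure.prod_restrict s t,
    lintegral_prod_mul ((measurable_gaussianPDF a u).aemeasurable)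
      ((measurable_gaussianPDF b w).aemeasurable),
    gaussianReal_apply a hu s, gaussianReal_apply b hw t]

lemma pdf_factor (μX μZ : ℝ) (σ2 τ2 : ℝ≥0) (hσ : 0 < σ2) (hτ : 0 < τ2) (y s : ℝ)
    (c : ℝ) (hc : c = (σ2 : ℝ) / ((σ2 : ℝ) + (τ2 : ℝ))) :
    gaussianPDFReal μX σ2 (y + c * s) * gaussianPDFReal μZ τ2 ((1 - c) * s - y)
      = gaussianPDFReal ((1 - c) * μX - c * μZ) (σ2 * τ2 / (σ2 + τ2)) y
        * gaussianPDFReal (μX + μZ) (σ2 + τ2) s := by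
  have hσ' : (0:ℝ) < (σ2 : ℝ) := hσ
  have hτ' : (0:ℝ) < (τ2 : ℝ) := hτ
  have hst : (0:ℝ) < (σ2 : ℝ) + (τ2 : ℝ) := by positivity
  have hvY : ((σ2 * τ2 / (σ2 + τ2) : ℝ≥0) : ℝ) = (σ2 : ℝ) * (τ2 : ℝ) / ((σ2 : ℝ) + (τ2 : ℝ)) := by
    push_cast
    rfl
  have hvS : ((σ2 + τ2 : ℝ≥0) : ℝ) = (σ2 : ℝ) + (τ2 : ℝ) := by push_cast; rfl
  simp only [gaussianPDFReal, hvY, hvS]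
  have hπ : (0:ℝ) < π := pi_pos
  -- constants
  have hconst : (√(2 * π * (σ2:ℝ)))⁻¹ * (√(2 * π * (τ2:ℝ)))⁻¹
      = (√(2 * π * ((σ2:ℝ) * (τ2:ℝ) / ((σ2:ℝ) + (τ2:ℝ)))))⁻¹ * (√(2 * π * ((σ2:ℝ) + (τ2:ℝ))))⁻¹ := by
    rw [← mul_inv, ← mul_inv, ← Real.sqrt_mul (by positivity), ← Real.sqrt_mul (by positivity)]
    congr 1
    field_simp
  have hexp : (- (y + c * s - μX) ^ 2 / (2 * (σ2:ℝ))) + (- ((1 - c) * s - y - μZ) ^ 2 / (2 * (τ2:ℝ)))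
      = (- (y - ((1 - c) * μX - c * μZ)) ^ 2 / (2 * ((σ2:ℝ) * (τ2:ℝ) / ((σ2:ℝ) + (τ2:ℝ)))))
        + (- (s - (μX + μZ)) ^ 2 / (2 * ((σ2:ℝ) + (τ2:ℝ)))) := by
    subst hc
    field_simp
    ring
  calc (√(2 * π * (σ2:ℝ)))⁻¹ * rexp (-(y + c * s - μX) ^ 2 / (2 * (σ2:ℝ)))
        * ((√(2 * π * (τ2:ℝ)))⁻¹ * rexp (-((1 - c) * s - y - μZ) ^ 2 / (2 * (τ2:ℝ))))
      = ((√(2 * π * (σ2:ℝ)))⁻¹ * (√(2 * π * (τ2:ℝ)))⁻¹)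
        * rexp ((- (y + c * s - μX) ^ 2 / (2 * (σ2:ℝ))) + (- ((1 - c) * s - y - μZ) ^ 2 / (2 * (τ2:ℝ)))) := by
        rw [Real.exp_add]; ring
    _ = _ := by
        rw [hconst, hexp, Real.exp_add]; ring

lemma mapA (μX μZ : ℝ) (σ2 τ2 : ℝ≥0) (hσ : 0 < σ2) (hτ : 0 < τ2)
    (c : ℝ) (hc : c = (σ2 : ℝ) / ((σ2 : ℝ) + (τ2 : ℝ))) :
    Measure.map (Teq c) ((gaussianReal μX σ2).prod (gaussianReal μZ τ2))
      = (gaussianReal ((1 - c) * μX - c * μZ) (σ2 * τ2 / (σ2 + τ2))).prod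
          (gaussianReal (μX + μZ) (σ2 + τ2)) := by
  have hvY : σ2 * τ2 / (σ2 + τ2) ≠ 0 := by
    refine ne_of_gt (div_pos (mul_pos hσ hτ) ?_)
    exact add_pos hσ hτ
  have hvS : σ2 + τ2 ≠ 0 := (add_pos hσ hτ).ne'
  rw [gaussian_prod_eq_withDensity _ _ _ _ hσ.ne' hτ.ne',
    map_withDensity_equiv (Teq c) volume
      (f := fun p => gaussianPDF μX σ2 p.1 * gaussianPDF μZ τ2 p.2)
      (((measurable_gaussianPDF μX σ2).comp measurable_fst).mul
        ((measurable_gaussianPDF μZ τ2).comp measurable_snd))]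
  have hvol : Measure.map (⇑(Teq c)) (volume : Measure (ℝ × ℝ)) = volume := by
    rw [Teq_coe, map_Tlin_volume]
  rw [hvol, gaussian_prod_eq_withDensity _ _ _ _ hvY hvS]
  congr 1
  funext p
  have hsymm : (Teq c).symm p = (p.1 + c * p.2, (1 - c) * p.2 - p.1) := rfl
  simp only [Function.comp_apply, hsymm, gaussianPDF]
  rw [← ENNReal.ofReal_mul (gaussianPDFReal_nonneg _ _ _),
    ← ENNReal.ofReal_mul (gaussianPDFReal_nonneg _ _ _),
    pdf_factor μX μZ σ2 τ2 hσ hτ p.1 p.2 c hc]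

end GoodhartHelpers


/-- Regressional Goodhart, case (a): if `X` and `Z` are independent Gaussian random
variables with means `μX, μZ` and variances `σ², τ² > 0`, then almost surely
`E[X | X + Z] = μX + (X + Z − μX − μZ) · σ²/(σ² + τ²)`. -/
theorem condexp_add_indep_gaussian
    {Ω : Type*} {mΩ : MeasurableSpace Ω} {μ : Measure Ω} [IsProbabilityMeasure μ]
    (X Z : Ω → ℝ) (hX : Measurable X) (hZ : Measurable Z)
    (μX μZ : ℝ) (σ2 τ2 : ℝ≥0) (hσ2 : 0 < σ2) (hτ2 : 0 < τ2)
    (hXlaw : Measure.map X μ = gaussianReal μX σ2)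
    (hZlaw : Measure.map Z μ = gaussianReal μZ τ2)
    (hindep : IndepFun X Z μ) :
    μ[X | MeasurableSpace.comap (fun ω => X ω + Z ω) inferInstance]
      =ᵐ[μ] fun ω =>
        μX + (X ω + Z ω - μX - μZ) * ((σ2 : ℝ) / ((σ2 : ℝ) + (τ2 : ℝ))) := by
  set c : ℝ := (σ2 : ℝ) / ((σ2 : ℝ) + (τ2 : ℝ)) with hc
  set S : Ω → ℝ := fun ω => X ω + Z ω with hSdef
  set Y : Ω → ℝ := fun ω => X ω - c * S ω with hYdef
  have hS : Measurable S := hX.add hZ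
  have hYm : Measurable Y := hX.sub (hS.const_mul c)
  -- joint law of (X, Z)
  have hpairXZ : Measure.map (fun ω => (X ω, Z ω)) μ
      = (gaussianReal μX σ2).prod (gaussianReal μZ τ2) := by
    rw [← hXlaw, ← hZlaw]
    exact (indepFun_iff_map_prod_eq_prod_map_map hX.aemeasurable hZ.aemeasurable).1 hindep
  -- joint law of (Y, S)
  have hcomp : (fun ω => (Y ω, S ω)) = (Teq c) ∘ (fun ω => (X ω, Z ω)) := by
    funext ω
    show (X ω - c * (X ω + Z ω), X ω + Z ω)
      = ((1 - c) * X ω - c * Z ω, X ω + Z ω)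
    exact Prod.ext (by ring) rfl
  have hmapYS : Measure.map (fun ω => (Y ω, S ω)) μ
      = (gaussianReal ((1 - c) * μX - c * μZ) (σ2 * τ2 / (σ2 + τ2))).prod
          (gaussianReal (μX + μZ) (σ2 + τ2)) := by
    rw [hcomp, ← Measure.map_map (Teq c).measurable (hX.prodMk hZ), hpairXZ,
      mapA μX μZ σ2 τ2 hσ2 hτ2 c hc]
  have hYlaw : Measure.map Y μ = gaussianReal ((1 - c) * μX - c * μZ) (σ2 * τ2 / (σ2 + τ2)) := by
    have h1 : Measure.map Prod.fst (Measure.map (fun ω => (Y ω, S ω)) μ) = Measure.map Y μ := by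
      rw [Measure.map_map measurable_fst (hYm.prodMk hS)]
      rfl
    rw [← h1, hmapYS, Measure.map_fst_prod]
    simp
  have hSlaw2 : Measure.map S μ = gaussianReal (μX + μZ) (σ2 + τ2) := by
    have h1 : Measure.map Prod.snd (Measure.map (fun ω => (Y ω, S ω)) μ) = Measure.map S μ := by
      rw [Measure.map_map measurable_snd (hYm.prodMk hS)]
      rfl
    rw [← h1, hmapYS, Measure.map_snd_prod]
    simp
  have hindepYS : IndepFun Y S μ := by
    rw [indepFun_iff_map_prod_eq_prod_map_map hYm.aemeasurable hS.aemeasurable]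
    rw [hmapYS, hYlaw, hSlaw2]
  -- integrability
  have hXint : Integrable X μ := by
    have h := integrable_map_measure (f := X) (μ := μ) aestronglyMeasurable_id hX.aemeasurable
    rw [hXlaw] at h
    simpa [Function.comp] using h.1 (integrable_id_gaussianReal μX σ2)
  have hZint : Integrable Z μ := by
    have h := integrable_map_measure (f := Z) (μ := μ) aestronglyMeasurable_id hZ.aemeasurable
    rw [hZlaw] at h
    simpa [Function.comp] using h.1 (integrable_id_gaussianReal μZ τ2)
  have hSint : Integrable S μ := hXint.add hZint
  have hcSint : Integrable (fun ω => c * S ω) μ := hSint.const_mul c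
  have hYint : Integrable Y μ := hXint.sub hcSint
  -- means
  have hmeanX : ∫ ω, X ω ∂μ = μX := by
    have := integral_map hX.aemeasurable (aestronglyMeasurable_id (μ := Measure.map X μ))
    rw [hXlaw] at this
    simpa [_root_.integral_id_gaussianReal] using this.symm
  have hmeanZ : ∫ ω, Z ω ∂μ = μZ := by
    have := integral_map hZ.aemeasurable (aestronglyMeasurable_id (μ := Measure.map Z μ))
    rw [hZlaw] at this
    simpa [_root_.integral_id_gaussianReal] using this.symm
  have hmeanY : ∫ ω, Y ω ∂μ = μX - c * (μX + μZ) := by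
    rw [hYdef]
    rw [integral_sub hXint hcSint, integral_const_mul, hSdef]
    rw [integral_add hXint hZint, hmeanX, hmeanZ]
  -- conditional expectation
  set m : MeasurableSpace Ω := MeasurableSpace.comap S inferInstance with hm_def
  have hm : m ≤ mΩ := hS.comap_le
  haveI : SigmaFinite (μ.trim hm) := by
    exact isFiniteMeasure_trim hm |>.toSigmaFinite
  have hXeq : X = fun ω => Y ω + c * S ω := by
    funext ω
    simp [hYdef]
  have h1 : μ[X|m] =ᵐ[μ] μ[Y|m] + μ[fun ω => c * S ω|m] := by
    rw [hXeq]
    exact condExp_add hYint hcSint m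
  have hYsm : StronglyMeasurable[MeasurableSpace.comap Y inferInstance] Y := by
    have : Measurable[MeasurableSpace.comap Y inferInstance] Y := Measurable.of_comap_le le_rfl
    exact this.stronglyMeasurable
  have h2 : μ[Y|m] =ᵐ[μ] fun _ => ∫ ω, Y ω ∂μ :=
    condExp_indep_eq hYm.comap_le hm hYsm hindepYS
  have hcSsm : StronglyMeasurable[m] (fun ω => c * S ω) := by
    have hSm : Measurable[m] S := Measurable.of_comap_le le_rfl
    exact (hSm.const_mul c).stronglyMeasurable
  have h3 : μ[fun ω => c * S ω|m] = fun ω => c * S ω :=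
    condExp_of_stronglyMeasurable hm hcSsm hcSint
  filter_upwards [h1, h2] with ω hω1 hω2
  rw [hω1]
  simp only [Pi.add_apply, h3, hω2, hmeanY]
  show μX - c * (μX + μZ) + c * (X ω + Z ω) = μX + (X ω + Z ω - μX - μZ) * c
  ring
end

section
/- Let P be a probability measure on ℝ that is absolutely continuous with respect to Lebesgue measure, and let n ≥ 1 be a natural number. Let Q_n be the law of the maximum of n i.i.d. samples from P, i.e., the pushforward of the product measure P^n on ℝⁿ under the map x ↦ max_{1 ≤ i ≤ n} x_i. Then the Kullback–Leibler divergence of Q_n from P equals log n − (n − 1)/n. -/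
open MeasureTheory ProbabilityTheory
open scoped ENNReal Classical
open Set Filter Real
open scoped NNReal Topology

section Aux

variable (P : Measure ℝ) [IsProbabilityMeasure P]

lemma cdf_cont (hac : P ≪ volume) : Continuous (cdf P) := by
  have hmono := monotone_cdf P
  rw [continuous_iff_continuousAt]
  intro a
  have hleft : Function.leftLim (cdf P) a = cdf P a := by
    have h1 : P {a} = 0 := hac (volume_singleton)
    have h2 : (cdf P).measure {a} = ENNReal.ofReal (cdf P a - Function.leftLim (cdf P) a) :=
      StieltjesFunction.measure_singleton _ a
    rw [measure_cdf, h1] at h2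
    have h3 : cdf P a - Function.leftLim (cdf P) a ≤ 0 := by
      by_contra h
      push_neg at h
      rw [eq_comm, ENNReal.ofReal_eq_zero] at h2
      linarith
    have h4 : Function.leftLim (cdf P) a ≤ cdf P a := hmono.leftLim_le le_rfl
    linarith
  rw [hmono.continuousAt_iff_leftLim_eq_rightLim, hleft, (cdf P).rightLim_eq a]

lemma cdf_preimage (hac : P ≪ volume) {t : ℝ} (ht0 : 0 ≤ t) (ht1 : t < 1) :
    P ((cdf P) ⁻¹' Iic t) = ENNReal.ofReal t := by
  have hF := cdf_cont P hac
  by_cases hne : ((cdf P) ⁻¹' Iic t).Nonempty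
  · -- the set is Iic a with cdf P a = t
    have hclosed : IsClosed ((cdf P) ⁻¹' Iic t) := isClosed_Iic.preimage hF
    have hbdd : BddAbove ((cdf P) ⁻¹' Iic t) := by
      obtain ⟨b, hb⟩ := (tendsto_order.1 (tendsto_cdf_atTop P)).1 t ht1 |>.exists
      refine ⟨b, fun x hx => ?_⟩
      by_contra hxb
      push_neg at hxb
      exact absurd (le_trans (monotone_cdf P hxb.le) hx) (not_le.2 hb)
    set a := sSup ((cdf P) ⁻¹' Iic t) with ha
    have hamem : a ∈ (cdf P) ⁻¹' Iic t := hclosed.csSup_mem hne hbdd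
    have hFa_le : cdf P a ≤ t := hamem
    have hFa_ge : t ≤ cdf P a := by
      have htd : Tendsto (cdf P) (𝓝[>] a) (𝓝 (cdf P a)) :=
        (hF.continuousAt.continuousWithinAt : ContinuousWithinAt (cdf P) (Ioi a) a)
      refine ge_of_tendsto htd ?_
      filter_upwards [self_mem_nhdsWithin] with x hx
      by_contra hlt
      push_neg at hlt
      exact absurd (le_csSup hbdd hlt.le) (not_le.2 hx)
    have hS : (cdf P) ⁻¹' Iic t = Iic a := by
      ext x
      constructor
      · exact fun hx => le_csSup hbdd hx
      · exact fun hx => le_trans (monotone_cdf P hx) hFa_le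
    rw [hS, ← ofReal_cdf P a, le_antisymm hFa_le hFa_ge]
  · rw [not_nonempty_iff_eq_empty] at hne
    rw [hne, measure_empty]
    -- t must be 0
    by_cases h0 : t = 0
    · simp [h0]
    · exfalso
      obtain ⟨b, hb⟩ := (tendsto_order.1 (tendsto_cdf_atBot P)).2 t (lt_of_le_of_ne ht0 (Ne.symm h0)) |>.exists
      have hmem : b ∈ (cdf P) ⁻¹' Iic t := le_of_lt hb
      rw [hne] at hmem
      exact hmem

lemma map_cdf (hac : P ≪ volume) :
    Measure.map (cdf P) P = volume.restrict (Icc (0:ℝ) 1) := by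
  have hF := cdf_cont P hac
  have hmeas : Measurable (cdf P) := hF.measurable
  have hprob : IsProbabilityMeasure (volume.restrict (Icc (0:ℝ) 1)) := by
    constructor
    rw [Measure.restrict_apply_univ, Real.volume_Icc]
    norm_num
  have : IsProbabilityMeasure (Measure.map (cdf P) P) := Measure.isProbabilityMeasure_map hmeas.aemeasurable
  refine Measure.ext_of_Iic _ _ (fun t => ?_)
  rw [Measure.map_apply hmeas measurableSet_Iic, Measure.restrict_apply measurableSet_Iic]
  rcases lt_or_ge t 0 with ht | ht
  · have h1 : (cdf P) ⁻¹' Iic t = ∅ := by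
      ext x; simp only [mem_preimage, mem_Iic, mem_empty_iff_false, iff_false, not_le]
      exact lt_of_lt_of_le ht (cdf_nonneg P x)
    have h2 : Iic t ∩ Icc (0:ℝ) 1 = ∅ := by
      ext x; simp only [mem_inter_iff, mem_Iic, mem_Icc, mem_empty_iff_false, iff_false]
      rintro ⟨hx1, hx2, -⟩; linarith
    simp [h1, h2]
  rcases lt_or_ge t 1 with ht1 | ht1
  · rw [cdf_preimage P hac ht ht1]
    have h2 : Iic t ∩ Icc (0:ℝ) 1 = Icc 0 t := by
      ext x; simp only [mem_inter_iff, mem_Iic, mem_Icc]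
      constructor
      · rintro ⟨hx1, hx2, -⟩; exact ⟨hx2, hx1⟩
      · rintro ⟨hx1, hx2⟩; exact ⟨hx2, hx1, by linarith⟩
    rw [h2, Real.volume_Icc, sub_zero]
  · have h1 : (cdf P) ⁻¹' Iic t = univ := by
      ext x; simp only [mem_preimage, mem_Iic, mem_univ, iff_true]
      exact le_trans (cdf_le_one P x) ht1
    have h2 : Iic t ∩ Icc (0:ℝ) 1 = Icc 0 1 := by
      ext x; simp only [mem_inter_iff, mem_Iic, mem_Icc]
      exact ⟨fun h => h.2, fun h => ⟨le_trans h.2 ht1, h⟩⟩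
    rw [h1, h2, Real.volume_Icc, measure_univ]
    norm_num

lemma cdf_preimage_self (hac : P ≪ volume) (t : ℝ) :
    P ((cdf P) ⁻¹' Iic (cdf P t)) = ENNReal.ofReal (cdf P t) := by
  rcases lt_or_ge (cdf P t) 1 with h | h
  · exact cdf_preimage P hac (cdf_nonneg P t) h
  · have h1 : cdf P t = 1 := le_antisymm (cdf_le_one P t) h
    have hsub : Iic t ⊆ (cdf P) ⁻¹' Iic (cdf P t) := fun x hx => monotone_cdf P hx
    have h2 : P (Iic t) = 1 := by rw [← ofReal_cdf P t, h1]; norm_num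
    have h3 : (1:ℝ≥0∞) ≤ P ((cdf P) ⁻¹' Iic (cdf P t)) := h2 ▸ measure_mono hsub
    rw [h1, ENNReal.ofReal_one]
    refine le_antisymm (by simpa using prob_le_one) ?_
    rw [h1] at h3
    exact h3

lemma Iic_ae_eq_preimage (hac : P ≪ volume) (t : ℝ) :
    (Iic t : Set ℝ) =ᵐ[P] (cdf P) ⁻¹' Iic (cdf P t) := by
  have hsub : Iic t ⊆ (cdf P) ⁻¹' Iic (cdf P t) := fun x hx => monotone_cdf P hx
  rw [Filter.eventuallyEq_set]
  have hdiff : P ((cdf P) ⁻¹' Iic (cdf P t) \ Iic t) = 0 := by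
    rw [measure_diff hsub (by exact measurableSet_Iic.nullMeasurableSet) (measure_ne_top _ _),
      cdf_preimage_self P hac t, ← ofReal_cdf P t, tsub_self]
  have h1 : ∀ᵐ x ∂P, x ∉ (cdf P) ⁻¹' Iic (cdf P t) \ Iic t := by
    rw [ae_iff]
    convert hdiff using 2
    ext x
    simp only [mem_diff, mem_setOf_eq, not_not]
  filter_upwards [h1] with x hx
  simp only [mem_diff, not_and, not_not] at hx
  exact ⟨fun h => hsub h, fun h => by by_contra h2; exact absurd (hx h) h2⟩

lemma sup_measurable (n : ℕ) : Measurable (fun x : Fin n → ℝ => ⨆ i, x i) :=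
  Measurable.iSup (fun i => measurable_pi_apply i)

lemma bon_Iic (n : ℕ) (hn : 1 ≤ n) (t : ℝ) :
    Measure.map (fun x : Fin n → ℝ => ⨆ i, x i) (Measure.pi fun _ => P) (Iic t)
      = P (Iic t) ^ n := by
  haveI : Nonempty (Fin n) := ⟨⟨0, hn⟩⟩
  rw [Measure.map_apply (sup_measurable n) measurableSet_Iic]
  have hset : (fun x : Fin n → ℝ => ⨆ i, x i) ⁻¹' Iic t = Set.pi univ (fun _ => Iic t) := by
    ext x
    simp only [mem_preimage, mem_Iic, Set.mem_pi, mem_univ, forall_true_left, true_implies]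
    exact ⟨fun h i => le_trans (le_ciSup (Set.Finite.bddAbove (finite_range x)) i) h,
      fun h => ciSup_le h⟩
  rw [hset, Measure.pi_pi]
  simp [Finset.prod_const]

lemma lint_pow (n : ℕ) (hn : 1 ≤ n) (c : ℝ) (hc : 0 ≤ c) :
    ∫⁻ u in Icc (0:ℝ) c, ENNReal.ofReal ((n:ℝ) * u^(n-1)) = ENNReal.ofReal (c^n) := by
  have hint : IntegrableOn (fun u : ℝ => (n:ℝ) * u^(n-1)) (Icc 0 c) volume :=
    (Continuous.integrableOn_Icc (by continuity))
  rw [← MeasureTheory.ofReal_integral_eq_lintegral_ofReal hint]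
  · congr 1
    rw [integral_Icc_eq_integral_Ioc, ← intervalIntegral.integral_of_le hc]
    rw [intervalIntegral.integral_const_mul, integral_pow]
    have h1 : n - 1 + 1 = n := Nat.succ_pred_eq_of_pos hn
    rw [h1]
    field_simp
    rw [zero_pow (by omega : n ≠ 0), Nat.cast_sub hn]
    push_cast
    ring
  · filter_upwards [ae_restrict_mem measurableSet_Icc] with u hu
    have : (0:ℝ) ≤ u := hu.1
    positivity

lemma bon_eq_withDensity (hac : P ≪ volume) (n : ℕ) (hn : 1 ≤ n) :
    Measure.map (fun x : Fin n → ℝ => ⨆ i, x i) (Measure.pi fun _ => P)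
      = P.withDensity (fun x => ENNReal.ofReal ((n:ℝ) * cdf P x ^ (n-1))) := by
  have hF := cdf_cont P hac
  have hFm : Measurable (cdf P) := hF.measurable
  have hhm : Measurable (fun u : ℝ => ENNReal.ofReal ((n:ℝ) * u ^ (n-1))) := by
    exact (measurable_const.mul ((measurable_id.pow_const _))).ennreal_ofReal
  have hfm : Measurable (fun x => ENNReal.ofReal ((n:ℝ) * cdf P x ^ (n-1))) := hhm.comp hFm
  have hbd : ∀ x, ENNReal.ofReal ((n:ℝ) * cdf P x ^ (n-1)) ≤ ENNReal.ofReal n := by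
    intro x
    apply ENNReal.ofReal_le_ofReal
    have h1 : cdf P x ^ (n-1) ≤ 1 :=
      pow_le_one₀ (cdf_nonneg P x) (cdf_le_one P x)
    have h2 : (1:ℝ) ≤ n := by exact_mod_cast hn
    nlinarith
  haveI : IsFiniteMeasure (P.withDensity (fun x => ENNReal.ofReal ((n:ℝ) * cdf P x ^ (n-1)))) := by
    refine isFiniteMeasure_withDensity ?_
    refine ne_of_lt (lt_of_le_of_lt (lintegral_mono (fun x => hbd x)) ?_)
    rw [lintegral_const, measure_univ, mul_one]
    exact ENNReal.ofReal_lt_top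
  haveI : IsProbabilityMeasure
      (Measure.map (fun x : Fin n → ℝ => ⨆ i, x i) (Measure.pi fun _ => P)) :=
    Measure.isProbabilityMeasure_map (sup_measurable n).aemeasurable
  refine Measure.ext_of_Iic _ _ (fun t => ?_)
  rw [bon_Iic P n hn t, withDensity_apply _ measurableSet_Iic]
  have hae : ∫⁻ x in Iic t, ENNReal.ofReal ((n:ℝ) * cdf P x ^ (n-1)) ∂P
      = ∫⁻ x in (cdf P) ⁻¹' Iic (cdf P t), ENNReal.ofReal ((n:ℝ) * cdf P x ^ (n-1)) ∂P :=
    setLIntegral_congr (Iic_ae_eq_preimage P hac t)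
  rw [hae, ← setLIntegral_map measurableSet_Iic hhm hFm, map_cdf P hac,
    Measure.restrict_restrict measurableSet_Iic]
  have hset : Iic (cdf P t) ∩ Icc (0:ℝ) 1 = Icc 0 (cdf P t) := by
    ext x
    simp only [mem_inter_iff, mem_Iic, mem_Icc]
    constructor
    · rintro ⟨h1, h2, -⟩; exact ⟨h2, h1⟩
    · rintro ⟨h1, h2⟩; exact ⟨h2, h1, le_trans h2 (cdf_le_one P t)⟩
  rw [hset, lint_pow n hn _ (cdf_nonneg P t), ← ofReal_cdf P t,
    ← ENNReal.ofReal_pow (cdf_nonneg P t)]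

lemma contOn_pow_log (m : ℕ) (hm : 1 ≤ m) :
    ContinuousOn (fun x : ℝ => x ^ m * Real.log x) (Ici 0) := by
  intro x hx
  rcases eq_or_lt_of_le (mem_Ici.mp hx : (0:ℝ) ≤ x) with h0 | h0
  · subst h0
    have hval : ((0:ℝ)) ^ m * Real.log 0 = 0 := by
      rw [Real.log_zero, mul_zero]
    unfold ContinuousWithinAt
    simp only [hval]
    have hmain : Tendsto (fun x : ℝ => x ^ m * Real.log x) (𝓝[>] (0:ℝ)) (𝓝 0) := by
      have h := tendsto_log_mul_rpow_nhdsGT_zero (r := (m:ℝ)) (by positivity)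
      refine h.congr' ?_
      filter_upwards [self_mem_nhdsWithin] with y hy
      rw [Real.rpow_natCast, mul_comm]
    have heq : (Ici (0:ℝ)) = insert 0 (Ioi 0) := by
      rw [← Ioi_insert]
    rw [heq, nhdsWithin_insert]
    rw [Filter.tendsto_sup]
    refine ⟨?_, hmain⟩
    rw [tendsto_pure_left]
    intro s hs
    simpa [hval] using mem_of_mem_nhds hs
  · exact ((continuousAt_pow x m).mul (Real.continuousAt_log (ne_of_gt h0))).continuousWithinAt

lemma integral_pow_log (k : ℕ) (hk : 1 ≤ k) :
    ∫ x in (0:ℝ)..1, x ^ k * Real.log x = -(1 / ((k:ℝ)+1)^2) := by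
  set F : ℝ → ℝ := fun x => (x^(k+1) * Real.log x - x^(k+1)/((k:ℝ)+1)) / ((k:ℝ)+1) with hFdef
  have hk1 : ((k:ℝ)+1) ≠ 0 := by positivity
  have hcont : ContinuousOn F (Icc (0:ℝ) 1) := by
    apply ContinuousOn.div_const
    apply ContinuousOn.sub
    · exact (contOn_pow_log (k+1) (by omega)).mono (Icc_subset_Ici_self)
    · exact (continuous_pow (k+1)).continuousOn.div_const _
  have hderiv : ∀ x ∈ Ioo (0:ℝ) 1, HasDerivAt F (x ^ k * Real.log x) x := by
    intro x hx
    have hx0 : x ≠ 0 := ne_of_gt hx.1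
    have h1 : HasDerivAt (fun y : ℝ => y^(k+1)) (((k:ℝ)+1)*x^k) x := by
      have := hasDerivAt_pow (k+1) x
      simpa [Nat.cast_add] using this
    have h2 : HasDerivAt Real.log x⁻¹ x := Real.hasDerivAt_log hx0
    have h3 : HasDerivAt (fun y : ℝ => y^(k+1) * Real.log y)
        ((((k:ℝ)+1)*x^k) * Real.log x + x^(k+1) * x⁻¹) x := h1.mul h2
    have h4 : HasDerivAt F
        (((((k:ℝ)+1)*x^k) * Real.log x + x^(k+1) * x⁻¹ - (((k:ℝ)+1)*x^k)/((k:ℝ)+1)) / ((k:ℝ)+1)) x :=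
      (h3.sub (h1.div_const _)).div_const _
    convert h4 using 1
    field_simp
    ring
  have hint : IntervalIntegrable (fun x : ℝ => x ^ k * Real.log x) volume 0 1 := by
    apply ContinuousOn.intervalIntegrable
    rw [uIcc_of_le (by norm_num : (0:ℝ) ≤ 1)]
    exact (contOn_pow_log k hk).mono (Icc_subset_Ici_self)
  have := intervalIntegral.integral_eq_sub_of_hasDerivAt_of_le (by norm_num : (0:ℝ) ≤ 1)
    hcont hderiv hint
  rw [this, hFdef]
  have hz : (0:ℝ)^(k+1) = 0 := zero_pow (by omega)
  simp only [one_pow, Real.log_one, Real.log_zero, mul_zero, mul_one, hz, zero_div, sub_zero]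
  field_simp
  ring

lemma main_integral (n : ℕ) (hn : 1 ≤ n) :
    ∫ u in Icc (0:ℝ) 1, ((n:ℝ) * u^(n-1)) * Real.log ((n:ℝ) * u^(n-1))
      = Real.log n - ((n:ℝ)-1)/n := by
  rcases eq_or_lt_of_le hn with h1 | h2
  · simp [← h1]
  have hn2 : 2 ≤ n := h2
  have hn0 : (n:ℝ) ≠ 0 := by positivity
  have hcast : ((n-1:ℕ):ℝ) = (n:ℝ) - 1 := by
    rw [Nat.cast_sub hn, Nat.cast_one]
  rw [MeasureTheory.integral_Icc_eq_integral_Ioc]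
  have hae : ∀ᵐ u ∂(volume.restrict (Ioc (0:ℝ) 1)),
      ((n:ℝ) * u^(n-1)) * Real.log ((n:ℝ) * u^(n-1))
        = ((n:ℝ) * u^(n-1)) * Real.log n + ((n:ℝ) * ((n-1:ℕ):ℝ)) * (u^(n-1) * Real.log u) := by
    filter_upwards [ae_restrict_mem measurableSet_Ioc] with u hu
    have hu0 : (0:ℝ) < u := hu.1
    rw [Real.log_mul hn0 (by positivity), Real.log_pow]
    ring
  rw [integral_congr_ae hae]
  have hint1 : IntegrableOn (fun u : ℝ => ((n:ℝ) * u^(n-1)) * Real.log n) (Ioc 0 1) volume := by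
    apply Continuous.integrableOn_Ioc
    continuity
  have hint2 : IntegrableOn (fun u : ℝ => ((n:ℝ) * ((n-1:ℕ):ℝ)) * (u^(n-1) * Real.log u))
      (Ioc 0 1) volume := by
    apply Integrable.const_mul
    refine ((contOn_pow_log (n-1) (by omega)).mono Icc_subset_Ici_self).integrableOn_compact
      isCompact_Icc |>.mono_set Ioc_subset_Icc_self
  rw [integral_add hint1 hint2]
  have e1 : ∫ u in Ioc (0:ℝ) 1, ((n:ℝ) * u^(n-1)) * Real.log n = Real.log n := by
    rw [← intervalIntegral.integral_of_le (by norm_num : (0:ℝ) ≤ 1)]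
    rw [intervalIntegral.integral_mul_const, intervalIntegral.integral_const_mul, integral_pow,
      Nat.sub_add_cancel hn, hcast]
    rw [one_pow, zero_pow (by omega : n ≠ 0)]
    have h : ((n:ℝ) - 1 + 1) = n := by ring
    rw [h]
    field_simp
    ring
  have e2 : ∫ u in Ioc (0:ℝ) 1, ((n:ℝ) * ((n-1:ℕ):ℝ)) * (u^(n-1) * Real.log u)
      = -(((n:ℝ)-1)/n) := by
    rw [← intervalIntegral.integral_of_le (by norm_num : (0:ℝ) ≤ 1),
      intervalIntegral.integral_const_mul, integral_pow_log (n-1) (by omega)]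
    push_cast [hcast]
    have h : ((n:ℝ) - 1 + 1) = n := by ring
    rw [h]
    field_simp
  rw [e1, e2]
  ring
end Aux

/-- The Kullback–Leibler divergence `KL(Q ‖ P) = ∫ log (dQ/dP) dQ` of two measures,
valued in `[0, ∞]`; it is infinite unless `Q ≪ P` and the log-likelihood ratio is
integrable. -/

noncomputable def klDiv {α : Type*} [MeasurableSpace α] (Q P : Measure α) : ℝ≥0∞ :=
  if Q ≪ P ∧ Integrable (llr Q P) Q then ENNReal.ofReal (∫ x, llr Q P x ∂Q) else ∞

/-- For any probability measure `P` on `ℝ` absolutely continuous with respect to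
Lebesgue measure, the KL divergence of the best-of-`n` distribution (the law of the
maximum of `n` i.i.d. samples from `P`) from `P` equals `log n − (n − 1)/n`. -/
theorem klDiv_bestOfN (P : Measure ℝ) [IsProbabilityMeasure P] (hac : P ≪ volume)
    (n : ℕ) (hn : 1 ≤ n) :
    klDiv (Measure.map (fun x : Fin n → ℝ => ⨆ i, x i) (Measure.pi fun _ => P)) P
      = ENNReal.ofReal (Real.log n - ((n : ℝ) - 1) / n) := by
  have hF := cdf_cont P hac
  have hFm : Measurable (cdf P) := hF.measurable
  set g : ℝ → ℝ := fun x => (n:ℝ) * cdf P x ^ (n-1) with hgdef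
  have hg0 : ∀ x, 0 ≤ g x := fun x => by
    have := cdf_nonneg P x; positivity
  have hgm : Measurable g := (measurable_const.mul (hFm.pow_const _))
  have hfm : Measurable (fun x => ENNReal.ofReal (g x)) := hgm.ennreal_ofReal
  set Q := Measure.map (fun x : Fin n → ℝ => ⨆ i, x i) (Measure.pi fun _ => P) with hQdef
  have hQ : Q = P.withDensity (fun x => ENNReal.ofReal (g x)) := bon_eq_withDensity P hac n hn
  have hQP : Q ≪ P := hQ ▸ withDensity_absolutelyContinuous P _
  -- llr is a.e. log (g x)
  have hrn : Q.rnDeriv P =ᵐ[P] fun x => ENNReal.ofReal (g x) := by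
    rw [hQ]
    exact Measure.rnDeriv_withDensity P hfm
  have hllr_P : llr Q P =ᵐ[P] fun x => Real.log (g x) := by
    filter_upwards [hrn] with x hx
    rw [llr_def]
    simp only [hx, ENNReal.toReal_ofReal (hg0 x)]
  have hllr_Q : llr Q P =ᵐ[Q] fun x => Real.log (g x) := hQP.ae_le hllr_P
  -- bound for integrability
  obtain ⟨C, hC⟩ : ∃ C, ∀ v ∈ Icc (0:ℝ) n, ‖v * Real.log v‖ ≤ C :=
    isCompact_Icc.exists_bound_of_continuousOn Real.continuous_mul_log.continuousOn
  have hgmem : ∀ x, g x ∈ Icc (0:ℝ) n := by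
    intro x
    refine ⟨hg0 x, ?_⟩
    show (n:ℝ) * cdf P x ^ (n-1) ≤ n
    have h1 : cdf P x ^ (n-1) ≤ 1 := pow_le_one₀ (cdf_nonneg P x) (cdf_le_one P x)
    have h2 : (1:ℝ) ≤ n := by exact_mod_cast hn
    nlinarith
  have hint : Integrable (llr Q P) Q := by
    refine Integrable.congr ?_ hllr_Q.symm
    constructor
    · exact (Real.measurable_log.comp hgm).aestronglyMeasurable
    · have hlogm : Measurable fun x => Real.log (g x) := Real.measurable_log.comp hgm
      rw [hasFiniteIntegral_def, hQ,
        lintegral_withDensity_eq_lintegral_mul P hfm hlogm.enorm]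
      have hbound : ∀ x, (fun x => ENNReal.ofReal (g x)) x
          * ((‖Real.log (g x)‖₊ : ℝ≥0∞)) ≤ ENNReal.ofReal C := by
        intro x
        have h1 : ((‖Real.log (g x)‖₊ : ℝ≥0∞)) = ENNReal.ofReal |Real.log (g x)| := by
          rw [← Real.norm_eq_abs, ofReal_norm]; rfl
        rw [h1, ← ENNReal.ofReal_mul (hg0 x)]
        apply ENNReal.ofReal_le_ofReal
        calc g x * |Real.log (g x)| = |g x * Real.log (g x)| := by
              rw [abs_mul, abs_of_nonneg (hg0 x)]
          _ ≤ C := hC _ (hgmem x)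
      refine lt_of_le_of_lt (lintegral_mono hbound) ?_
      rw [lintegral_const, measure_univ, mul_one]
      exact ENNReal.ofReal_lt_top
  -- the value
  have hval : ∫ x, llr Q P x ∂Q = Real.log n - ((n:ℝ)-1)/n := by
    rw [integral_congr_ae hllr_Q, hQ]
    have hcoe : P.withDensity (fun x => ENNReal.ofReal (g x))
        = P.withDensity (fun x => ((Real.toNNReal (g x) : ℝ≥0) : ℝ≥0∞)) := rfl
    rw [hcoe,
      integral_withDensity_eq_integral_smul
        (f := fun x => Real.toNNReal (g x)) (measurable_real_toNNReal.comp hgm)]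
    have heq : ∀ x, (g x).toNNReal • Real.log (g x) = g x * Real.log (g x) := by
      intro x
      rw [NNReal.smul_def, smul_eq_mul, Real.coe_toNNReal _ (hg0 x)]
    rw [integral_congr_ae (Filter.Eventually.of_forall heq)]
    have hsm : AEStronglyMeasurable
        (fun u : ℝ => ((n:ℝ) * u^(n-1)) * Real.log ((n:ℝ) * u^(n-1)))
        (Measure.map (cdf P) P) :=
      ((measurable_const.mul (measurable_id.pow_const _)).mul
        (Real.measurable_log.comp
          (measurable_const.mul (measurable_id.pow_const _)))).aestronglyMeasurable
    have hmap := integral_map hFm.aemeasurable hsm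
    rw [map_cdf P hac] at hmap
    have hgoal : (fun x => g x * Real.log (g x))
        = fun x => ((n:ℝ) * cdf P x^(n-1)) * Real.log ((n:ℝ) * cdf P x^(n-1)) := rfl
    rw [hgoal, ← hmap, main_integral n hn]
  rw [klDiv, if_pos ⟨hQP, hint⟩, hval]
end

section
/- For every natural number n ≥ 1, the Lebesgue integral ∫₀¹ n·u^{n−1}·log(n·u^{n−1}) du equals log n − (n − 1)/n. -/
open MeasureTheory

lemma aux_cont (c : ℝ) (k : ℕ) :
    Continuous (fun u : ℝ => (c * u ^ k) * Real.log (c * u ^ k)) :=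
  Real.continuous_mul_log.comp (by continuity)

/-- For every `n ≥ 1`, `∫₀¹ n·u^(n−1)·log(n·u^(n−1)) du = log n − (n − 1)/n`:
the KL divergence of the best-of-`n` distribution from the uniform distribution
on `[0,1]`. -/
theorem integral_bestOfN_density_mul_log (n : ℕ) (hn : 1 ≤ n) :
    ∫ u in (0:ℝ)..1, (n * u ^ (n - 1)) * Real.log (n * u ^ (n - 1))
      = Real.log n - ((n : ℝ) - 1) / n := by
  obtain _ | n := n
  · omega
  obtain _ | m := n
  · norm_num
  -- n = m + 2
  set c : ℝ := (m : ℝ) + 2 with hc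
  have hc0 : (0:ℝ) < c := by positivity
  have hcast : ((m + 1 + 1 : ℕ) : ℝ) = c := by push_cast [hc]; ring
  have hsub : (m + 1 + 1) - 1 = m + 1 := rfl
  rw [hsub]
  simp only [hcast]
  set F : ℝ → ℝ := fun u => u ^ (m + 2) * Real.log (c * u ^ (m + 1))
      - ((m : ℝ) + 1) / c * u ^ (m + 2) with hF
  have hFeq : ∀ u : ℝ, F u = (u / c) * ((c * u ^ (m + 1)) * Real.log (c * u ^ (m + 1)))
      - ((m : ℝ) + 1) / c * u ^ (m + 2) := by
    intro u
    have : (u / c) * ((c * u ^ (m + 1)) * Real.log (c * u ^ (m + 1)))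
        = u ^ (m + 2) * Real.log (c * u ^ (m + 1)) := by
      field_simp
      ring
    rw [hF, this]
  have hFcont : Continuous F := by
    have : Continuous fun u : ℝ => (u / c) * ((c * u ^ (m + 1)) * Real.log (c * u ^ (m + 1)))
        - ((m : ℝ) + 1) / c * u ^ (m + 2) := by
      apply Continuous.sub
      · exact (continuous_id.div_const c).mul (aux_cont c (m+1))
      · continuity
    exact this.congr fun u => (hFeq u).symm
  have hderiv : ∀ u ∈ Set.Ioo (0:ℝ) 1,
      HasDerivAt F ((c * u ^ (m + 1)) * Real.log (c * u ^ (m + 1))) u := by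
    intro u hu
    have hu0 : u ≠ 0 := ne_of_gt hu.1
    have harg : c * u ^ (m + 1) ≠ 0 := by positivity
    have h1 : HasDerivAt (fun u : ℝ => c * u ^ (m + 1))
        (c * ((m + 1) * u ^ m)) u := by
      simpa using ((hasDerivAt_pow (m+1) u).const_mul c)
    have hlog : HasDerivAt (fun u : ℝ => Real.log (c * u ^ (m + 1)))
        ((c * u ^ (m + 1))⁻¹ * (c * ((m + 1) * u ^ m))) u :=
      by have := (Real.hasDerivAt_log harg).comp u h1; exact this
    have hpow : HasDerivAt (fun u : ℝ => u ^ (m + 2))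
        (((m:ℝ) + 2) * u ^ (m + 1)) u := by
      simpa using hasDerivAt_pow (m+2) u
    have := (hpow.mul hlog).sub ((hpow.const_mul (((m : ℝ) + 1) / c)))
    refine this.congr_deriv ?_
    field_simp
    ring
  have hint : IntervalIntegrable (fun u : ℝ => (c * u ^ (m + 1)) * Real.log (c * u ^ (m + 1)))
      volume 0 1 := (aux_cont c (m+1)).intervalIntegrable 0 1
  have key := intervalIntegral.integral_eq_sub_of_hasDeriv_right_of_le (by norm_num : (0:ℝ) ≤ 1)
    hFcont.continuousOn (fun u hu => (hderiv u hu).hasDerivWithinAt) hint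
  calc ∫ u in (0:ℝ)..1, (c * u ^ (m + 1)) * Real.log (c * u ^ (m + 1)) = F 1 - F 0 := key
    _ = Real.log c - (c - 1) / c := by
        simp only [hF]
        norm_num
        ring_nf
        field_simp
        rw [hc]; ring
end

section
/- Let 1 ≤ n ≤ N be natural numbers, let X₁, …, X_N be i.i.d. real-valued random variables with an atomless (continuous) distribution P, and let X_(1) ≤ X_(2) ≤ … ≤ X_(N) denote their order statistics. Let f : ℝ → ℝ be a bounded measurable function. Then E[ Σ_{i=n}^{N} (C(i−1, n−1)/C(N, n)) · f(X_(i)) ] = E[ f(max(Y₁, …, Y_n)) ], where Y₁, …, Y_n are i.i.d. with distribution P and C(a, b) denotes the binomial coefficient. -/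
open MeasureTheory ProbabilityTheory


-- fiber count
lemma fiber_card_aux {N n : ℕ} (hn : 1 ≤ n) (i : Fin N) :
    ((Finset.powersetCard n (Finset.univ : Finset (Fin N))).filter
      (fun T => T.max = (i : WithBot (Fin N)))).card = (i : ℕ).choose (n - 1) := by
  rw [← Fin.card_Iio (b := i), ← Finset.card_powersetCard]
  refine Finset.card_bij' (fun T _ => T.erase i) (fun T' _ => insert i T') ?_ ?_ ?_ ?_
  · intro T hT
    simp only [Finset.mem_filter, Finset.mem_powersetCard] at hT
    obtain ⟨⟨-, hcard⟩, hmax⟩ := hT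
    have hiT : i ∈ T := Finset.mem_of_max hmax
    rw [Finset.mem_powersetCard]
    constructor
    · intro j hj
      rw [Finset.mem_erase] at hj
      have : (j : WithBot (Fin N)) ≤ T.max := Finset.le_max hj.2
      rw [hmax, WithBot.coe_le_coe] at this
      exact Finset.mem_Iio.mpr (lt_of_le_of_ne this hj.1)
    · rw [Finset.card_erase_of_mem hiT, hcard]
  · intro T' hT'
    rw [Finset.mem_powersetCard] at hT'
    obtain ⟨hsub, hcard⟩ := hT'
    have hiT' : i ∉ T' := fun h => lt_irrefl i (Finset.mem_Iio.mp (hsub h))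
    simp only [Finset.mem_filter, Finset.mem_powersetCard]
    refine ⟨⟨Finset.subset_univ _, ?_⟩, ?_⟩
    · rw [Finset.card_insert_of_notMem hiT', hcard]; omega
    · refine le_antisymm (Finset.max_le fun a ha => ?_) (Finset.le_max (Finset.mem_insert_self i T'))
      rcases Finset.mem_insert.mp ha with h | h
      · exact WithBot.coe_le_coe.mpr (le_of_eq h)
      · exact WithBot.coe_le_coe.mpr (le_of_lt (Finset.mem_Iio.mp (hsub h)))
  · intro T hT
    simp only [Finset.mem_filter] at hT
    exact Finset.insert_erase (Finset.mem_of_max hT.2)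
  · intro T' hT'
    rw [Finset.mem_powersetCard] at hT'
    exact Finset.erase_insert (fun h => lt_irrefl i (Finset.mem_Iio.mp (hT'.1 h)))

-- sup' over a finset equals iSup over its orderEmbOfFin enumeration
lemma sup'_eq_iSup_orderEmb {N n : ℕ} (hn : 1 ≤ n) (T : Finset (Fin N)) (hc : T.card = n)
    (hT : T.Nonempty) (g : Fin N → ℝ) :
    (⨆ k : Fin n, g (T.orderEmbOfFin hc k)) = T.sup' hT g := by
  have : Nonempty (Fin n) := ⟨⟨0, hn⟩⟩
  rw [← Finset.sup'_univ_eq_ciSup]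
  refine le_antisymm (Finset.sup'_le _ _ fun k _ => Finset.le_sup' g (Finset.orderEmbOfFin_mem T hc k))
    (Finset.sup'_le _ _ fun j hj => ?_)
  have : j ∈ Set.range (T.orderEmbOfFin hc) := by
    rw [Finset.range_orderEmbOfFin]; exact hj
  obtain ⟨k, hk⟩ := this
  calc g j = g (T.orderEmbOfFin hc k) := by rw [hk]
    _ ≤ _ := Finset.le_sup' (fun k => g (T.orderEmbOfFin hc k)) (Finset.mem_univ k)

-- monotone sup' equals value at max'
lemma sup'_of_monotone {N : ℕ} {h : Fin N → ℝ} (hmono : Monotone h) (T : Finset (Fin N))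
    (hT : T.Nonempty) : T.sup' hT h = h (T.max' hT) :=
  le_antisymm (Finset.sup'_le _ _ fun j hj => hmono (T.le_max' j hj))
    (Finset.le_sup' h (T.max'_mem hT))

lemma measurable_iSup_coord (n : ℕ) (hn : 1 ≤ n) :
    Measurable (fun y : Fin n → ℝ => ⨆ k, y k) := by
  have : Nonempty (Fin n) := ⟨⟨0, hn⟩⟩
  have : (fun y : Fin n → ℝ => ⨆ k, y k)
      = Finset.univ.sup' Finset.univ_nonempty (fun k (y : Fin n → ℝ) => y k) := by
    funext y
    rw [← Finset.sup'_univ_eq_ciSup, Finset.sup'_apply]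
  rw [this]
  exact Finset.measurable_sup' _ fun k _ => measurable_pi_apply k

lemma map_tuple_eq_pi {Ω : Type*} {mΩ : MeasurableSpace Ω} {μ : Measure Ω}
    {N n : ℕ} (X : Fin N → Ω → ℝ) (hX : ∀ i, Measurable (X i))
    (P : Measure ℝ) [IsProbabilityMeasure P]
    (hiid : iIndepFun X μ)
    (hlaw : ∀ i, Measure.map (X i) μ = P)
    (ι : Fin n → Fin N) (hι : Function.Injective ι) :
    Measure.map (fun ω (k : Fin n) => X (ι k) ω) μ = Measure.pi fun _ => P := by
  refine (Measure.pi_eq fun s hs => ?_).symm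
  rw [Measure.map_apply (measurable_pi_lambda _ fun k => hX (ι k)) (MeasurableSet.univ_pi hs)]
  have hpre : (fun ω (k : Fin n) => X (ι k) ω) ⁻¹' Set.pi Set.univ s
      = ⋂ k ∈ Finset.univ, X (ι k) ⁻¹' s k := by
    ext ω; simp [Set.mem_pi]
  rw [hpre]
  set E : Fin N → Set ℝ := Function.extend ι s (fun _ => Set.univ) with hEdef
  have hEι : ∀ k, E (ι k) = s k := fun k => hι.extend_apply _ _ _
  have h1 : (⋂ k ∈ Finset.univ, X (ι k) ⁻¹' s k) = ⋂ i ∈ Finset.univ.image ι, X i ⁻¹' E i := by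
    rw [Finset.set_biInter_finset_image]
    exact Set.iInter₂_congr fun k _ => by rw [hEι]
  have hEmeas : ∀ i, i ∈ Finset.univ.image ι → MeasurableSet (E i) := by
    intro i hi
    obtain ⟨k, -, rfl⟩ := Finset.mem_image.mp hi
    rw [hEι]; exact hs k
  rw [h1, hiid.measure_inter_preimage_eq_mul _ hEmeas,
    Finset.prod_image (fun x _ y _ h => hι h)]
  refine Finset.prod_congr rfl fun k _ => ?_
  rw [hEι, ← hlaw (ι k), Measure.map_apply (hX (ι k)) (hs k)]

lemma integral_subset_max {Ω : Type*} {mΩ : MeasurableSpace Ω} {μ : Measure Ω}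
    {N n : ℕ} (hn : 1 ≤ n) (X : Fin N → Ω → ℝ) (hX : ∀ i, Measurable (X i))
    (P : Measure ℝ) [IsProbabilityMeasure P]
    (hiid : iIndepFun X μ)
    (hlaw : ∀ i, Measure.map (X i) μ = P)
    (f : ℝ → ℝ) (hf : Measurable f)
    (ι : Fin n → Fin N) (hι : Function.Injective ι) :
    ∫ ω, f (⨆ k : Fin n, X (ι k) ω) ∂μ
      = ∫ y : Fin n → ℝ, f (⨆ i, y i) ∂(Measure.pi fun _ => P) := by
  rw [← map_tuple_eq_pi X hX P hiid hlaw ι hι,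
    integral_map (measurable_pi_lambda _ fun k => hX (ι k)).aemeasurable
      (show Measurable fun y : Fin n → ℝ => f (⨆ i, y i) from
        hf.comp (measurable_iSup_coord n hn)).aestronglyMeasurable]

lemma key_sum {N n : ℕ} (hn : 1 ≤ n) (hnN : n ≤ N) (g : Fin N → ℝ) (f : ℝ → ℝ) :
    ∑ p ∈ (Finset.powersetCard n (Finset.univ : Finset (Fin N))).attach,
        f (⨆ k : Fin n, g (p.1.orderEmbOfFin (Finset.mem_powersetCard.mp p.2).2 k))
      = ∑ i : Fin N, ((i : ℕ).choose (n - 1) : ℝ) * f (g (Tuple.sort g i)) := by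
  have hN : 0 < N := lt_of_lt_of_le hn hnN
  set σ := Tuple.sort g with hσ
  set h : Fin N → ℝ := g ∘ σ with hh
  have hmono : Monotone h := Tuple.monotone_sort g
  classical
  set pcs := Finset.powersetCard n (Finset.univ : Finset (Fin N)) with hpcs
  have hne : ∀ T ∈ pcs, T.Nonempty := by
    intro T hT
    rw [Finset.mem_powersetCard] at hT
    exact Finset.card_pos.mp (hT.2 ▸ hn)
  set msup : Finset (Fin N) → ℝ :=
    fun T => if hT : T.Nonempty then f (T.sup' hT g) else 0 with hmsup
  set mval : Finset (Fin N) → ℝ :=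
    fun T => if hT : T.Nonempty then f (h (T.max' hT)) else 0 with hmval
  have step1 : ∑ p ∈ pcs.attach,
      f (⨆ k : Fin n, g (p.1.orderEmbOfFin (Finset.mem_powersetCard.mp p.2).2 k))
      = ∑ T ∈ pcs, msup T := by
    rw [← Finset.sum_attach pcs msup]
    refine Finset.sum_congr rfl fun p _ => ?_
    have hpne : p.1.Nonempty := hne p.1 p.2
    rw [sup'_eq_iSup_orderEmb hn p.1 (Finset.mem_powersetCard.mp p.2).2 hpne g, hmsup]
    simp [hpne]
  have hmem : ∀ (τ : Equiv.Perm (Fin N)), ∀ T ∈ pcs, T.map τ.toEmbedding ∈ pcs := by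
    intro τ T hT
    rw [Finset.mem_powersetCard] at hT ⊢
    exact ⟨Finset.subset_univ _, by rw [Finset.card_map]; exact hT.2⟩
  have hinv : ∀ (τ : Equiv.Perm (Fin N)), ∀ T : Finset (Fin N),
      (T.map τ.symm.toEmbedding).map τ.toEmbedding = T := by
    intro τ T
    rw [Finset.map_map]
    ext x
    simp [Function.Embedding.trans_apply]
  have step3 : ∑ T ∈ pcs, msup T = ∑ T ∈ pcs, mval T := by
    refine Finset.sum_nbij' (fun T => T.map σ.symm.toEmbedding)
      (fun T => T.map σ.toEmbedding) (fun T hT => hmem _ T hT) (fun T hT => hmem _ T hT)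
      (fun T _ => hinv σ T) (fun T _ => ?_) (fun T hT => ?_)
    · show (T.map σ.toEmbedding).map σ.symm.toEmbedding = T
      rw [Finset.map_map]
      ext x
      simp [Function.Embedding.trans_apply]
    · have hTne : T.Nonempty := hne T hT
      have hT'ne : (T.map σ.symm.toEmbedding).Nonempty := Finset.Nonempty.map hTne
      rw [hmsup, hmval]
      simp only [hTne, hT'ne, dif_pos]
      congr 1
      rw [← sup'_of_monotone hmono _ hT'ne]
      have : (T.map σ.symm.toEmbedding).sup' hT'ne h
          = T.sup' (Finset.map_nonempty.1 hT'ne) (h ∘ σ.symm.toEmbedding) :=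
        Finset.sup'_map h hT'ne
      rw [this]
      refine Finset.sup'_congr hTne rfl fun x _ => ?_
      simp [hh]
  -- fiberwise
  set d : Fin N := ⟨0, hN⟩ with hd
  set maxFin : Finset (Fin N) → Fin N := fun T => T.max.unbotD d with hmaxFin
  have hmaxeq : ∀ (T : Finset (Fin N)) (hTne : T.Nonempty), maxFin T = T.max' hTne := by
    intro T hTne
    have hcoe : (↑(T.max' hTne) : WithBot (Fin N)) = T.max := Finset.coe_max' hTne
    rw [hmaxFin]
    simp only [← hcoe, WithBot.unbotD_coe]
  have step4 : ∑ T ∈ pcs, mval T = ∑ i : Fin N, ((i : ℕ).choose (n - 1) : ℝ) * f (h i) := by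
    rw [← Finset.sum_fiberwise pcs maxFin mval]
    refine Finset.sum_congr rfl fun j _ => ?_
    have hfilter : pcs.filter (fun T => maxFin T = j)
        = pcs.filter (fun T => T.max = (j : WithBot (Fin N))) := by
      refine Finset.filter_congr fun T hT => ?_
      have hTne : T.Nonempty := hne T hT
      have hcoe : (↑(T.max' hTne) : WithBot (Fin N)) = T.max := Finset.coe_max' hTne
      constructor
      · intro hmx
        rw [← hcoe]
        exact congrArg _ ((hmaxeq T hTne).symm.trans hmx)
      · intro hmx
        rw [hmaxeq T hTne]
        exact WithBot.coe_injective (hcoe.trans hmx)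
    have hconst : ∀ T ∈ pcs.filter (fun T => maxFin T = j), mval T = f (h j) := by
      intro T hT
      rw [Finset.mem_filter] at hT
      have hTne : T.Nonempty := hne T hT.1
      have : T.max' hTne = j := (hmaxeq T hTne).symm.trans hT.2
      rw [hmval]
      simp only [hTne, dif_pos, this]
    rw [Finset.sum_congr rfl hconst, Finset.sum_const, hfilter, hpcs, fiber_card_aux hn j,
      nsmul_eq_mul]
  rw [step1, step3, step4]
  rfl


/-- Unbiasedness of the best-of-`n` estimator from order statistics: if
`X₁, …, X_N` are i.i.d. with atomless distribution `P`, with order statistics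
`X_(1) ≤ … ≤ X_(N)`, and `f` is bounded and measurable, then
`E[ Σ_{i=n}^{N} (C(i−1, n−1)/C(N, n)) · f(X_(i)) ] = E[ f(max(Y₁, …, Y_n)) ]`
where `Y₁, …, Y_n` are i.i.d. with distribution `P`. -/
theorem bestOfN_order_statistic_estimator_unbiased
    {Ω : Type*} {mΩ : MeasurableSpace Ω} {μ : Measure Ω} [IsProbabilityMeasure μ]
    (N n : ℕ) (hn : 1 ≤ n) (hnN : n ≤ N)
    (X : Fin N → Ω → ℝ) (hX : ∀ i, Measurable (X i))
    (P : Measure ℝ) [IsProbabilityMeasure P] [NullSingletonClass P]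
    (hiid : iIndepFun X μ)
    (hlaw : ∀ i, Measure.map (X i) μ = P)
    (f : ℝ → ℝ) (hf : Measurable f) (hbdd : ∃ C, ∀ x, |f x| ≤ C)
    -- `Xord ω i` is the `(i+1)`-st order statistic `X_(i+1)` of `X₁ ω, …, X_N ω`.
    (Xord : Ω → Fin N → ℝ)
    (hXord : ∀ ω i, Xord ω i = X (Tuple.sort (fun j => X j ω) i) ω) :
    (∫ ω, ∑ i ∈ (Finset.Icc n N).attach,
        ((Nat.choose (i.1 - 1) (n - 1) : ℝ) / (Nat.choose N n : ℝ)) *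
          f (Xord ω ⟨i.1 - 1, by
            have h := Finset.mem_Icc.mp i.2; omega⟩) ∂μ)
      = ∫ y : Fin n → ℝ, f (⨆ i, y i) ∂(Measure.pi fun _ => P) := by
  classical
  have hNpos : 0 < N := lt_of_lt_of_le hn hnN
  set pcs := Finset.powersetCard n (Finset.univ : Finset (Fin N)) with hpcs
  have hCne : ((N.choose n : ℝ)) ≠ 0 := Nat.cast_ne_zero.mpr (Nat.choose_pos hnN).ne'
  -- pointwise rewriting of the integrand
  have hpt : ∀ ω, (∑ i ∈ (Finset.Icc n N).attach,
        ((Nat.choose (i.1 - 1) (n - 1) : ℝ) / (Nat.choose N n : ℝ)) *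
          f (Xord ω ⟨i.1 - 1, by have h := Finset.mem_Icc.mp i.2; omega⟩))
      = ((N.choose n : ℝ))⁻¹ * ∑ p ∈ pcs.attach,
          f (⨆ k : Fin n, X ((p.1.orderEmbOfFin (Finset.mem_powersetCard.mp p.2).2) k) ω) := by
    intro ω
    set g : Fin N → ℝ := fun j => X j ω with hg
    have hXog : Xord ω = fun i => g (Tuple.sort g i) := by
      funext i; rw [hXord ω i]
    rw [key_sum hn hnN g f]
    set F : ℕ → ℝ := fun m =>
      if hm : m < N then ((m.choose (n - 1) : ℝ) / (N.choose n : ℝ)) * f (g (Tuple.sort g ⟨m, hm⟩))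
      else 0 with hF
    have c1 : ∀ i : {x // x ∈ Finset.Icc n N},
        ((Nat.choose (i.1 - 1) (n - 1) : ℝ) / (Nat.choose N n : ℝ)) *
          f (Xord ω ⟨i.1 - 1, by have h := Finset.mem_Icc.mp i.2; omega⟩) = F (i.1 - 1) := by
      intro i
      have hlt : i.1 - 1 < N := by have h := Finset.mem_Icc.mp i.2; omega
      rw [hF]
      simp only [hlt, dif_pos]
      rw [hXog]
    rw [Finset.sum_congr rfl fun i _ => c1 i, Finset.sum_attach (Finset.Icc n N) (fun m => F (m - 1))]
    have c2 : ∑ m ∈ Finset.Icc n N, F (m - 1) = ∑ j ∈ Finset.Icc (n - 1) (N - 1), F j := by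
      refine Finset.sum_nbij' (fun a => a - 1) (fun b => b + 1) ?_ ?_ ?_ ?_ ?_
      · intro a ha; rw [Finset.mem_Icc] at ha ⊢; omega
      · intro b hb; rw [Finset.mem_Icc] at hb ⊢; omega
      · intro a ha; rw [Finset.mem_Icc] at ha; omega
      · intro b hb; rw [Finset.mem_Icc] at hb; omega
      · intro a _; rfl
    have c3 : ∑ j ∈ Finset.Icc (n - 1) (N - 1), F j = ∑ j ∈ Finset.range N, F j := by
      refine Finset.sum_subset ?_ ?_
      · intro j hj; rw [Finset.mem_Icc] at hj; rw [Finset.mem_range]; omega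
      · intro j hj hj'
        rw [Finset.mem_range] at hj
        rw [Finset.mem_Icc] at hj'
        have : j < n - 1 := by omega
        rw [hF]
        simp [hj, Nat.choose_eq_zero_of_lt this]
    rw [c2, c3, ← Fin.sum_univ_eq_sum_range F N, Finset.mul_sum]
    refine Finset.sum_congr rfl fun i _ => ?_
    rw [hF]
    simp only [i.2, dif_pos, Fin.eta]
    ring
  have hmeas_sup : ∀ p : {x // x ∈ pcs},
      Measurable (fun ω => f (⨆ k : Fin n,
        X ((p.1.orderEmbOfFin (Finset.mem_powersetCard.mp p.2).2) k) ω)) := by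
    intro p
    exact hf.comp ((measurable_iSup_coord n hn).comp
      (measurable_pi_lambda _ fun k => hX _))
  obtain ⟨C, hC⟩ := hbdd
  have hint : ∀ p ∈ pcs.attach, Integrable (fun ω => f (⨆ k : Fin n,
      X ((p.1.orderEmbOfFin (Finset.mem_powersetCard.mp p.2).2) k) ω)) μ := by
    intro p _
    refine ⟨(hmeas_sup p).aestronglyMeasurable, ?_⟩
    refine HasFiniteIntegral.of_bounded (C := C) (ae_of_all _ fun ω => ?_)
    simpa [Real.norm_eq_abs] using hC _
  simp only [hpt]
  rw [integral_const_mul, integral_finset_sum _ hint]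
  have each : ∀ p ∈ pcs.attach, (∫ ω, f (⨆ k : Fin n,
      X ((p.1.orderEmbOfFin (Finset.mem_powersetCard.mp p.2).2) k) ω) ∂μ)
      = ∫ y : Fin n → ℝ, f (⨆ i, y i) ∂(Measure.pi fun _ => P) := by
    intro p _
    exact integral_subset_max hn X hX P hiid hlaw f hf _
      (p.1.orderEmbOfFin (Finset.mem_powersetCard.mp p.2).2).injective
  rw [Finset.sum_congr rfl each, Finset.sum_const, Finset.card_attach, hpcs,
    Finset.card_powersetCard, Finset.card_univ, Fintype.card_fin, nsmul_eq_mul,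
    ← mul_assoc, inv_mul_cancel₀ hCne, one_mul]
end
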